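/- Let f ∈ ℍ[X] have degree 2n with n ≥ 1, and suppose there exist spherical roots λ₁, …, λ_n ∈ ℍ \ ℝ of f that are pairwise not quadratically equivalent. Then there exist c ∈ ℍ and g ∈ ℝ[X] such that f = c • (g.map φ), where φ : ℝ → ℍ is the canonical algebra map; i.e., f is a scalar multiple of a polynomial with real coefficients. -/

import Mathlib

open Polynomial

namespace SphericalAux

noncomputable section

local notation "ℍ" => Quaternion ℝ

/-- The real characteristic polynomial `X² - t X + ν`. -/
def cp (t ν : ℝ) : Polynomial ℝ := X ^ 2 - C t * X + C ν

lemma cp_monic (t ν : ℝ) : (cp t ν).Monic := by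
  have : cp t ν = X ^ 2 + (-(C t * X) + C ν) := by rw [cp]; ring
  rw [this]
  apply monic_X_pow_add
  apply lt_of_le_of_lt (degree_add_le _ _)
  refine max_lt ?_ ?_
  · simpa using lt_of_le_of_lt (degree_C_mul_X_le t) (by norm_num)
  · exact lt_of_le_of_lt (degree_C_le) (by norm_num)

lemma cp_natDegree (t ν : ℝ) : (cp t ν).natDegree = 2 := by
  have : cp t ν = C 1 * X ^ 2 + C (-t) * X + C ν := by rw [cp]; simp; ring
  rw [this, natDegree_quadratic one_ne_zero]

lemma aeval_cp (t ν : ℝ) (r : ℍ) :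
    aeval r (cp t ν) = r ^ 2 - t • r + ((ν : ℝ) : ℍ) := by
  simp [cp, Algebra.smul_def, Quaternion.algebraMap_def, sub_mul]

/-- `C x` commutes with any polynomial when `x` is central. -/
lemma commute_C_poly {R : Type*} [Semiring R] {x : R} (hx : ∀ y, Commute x y)
    (b : R[X]) : Commute (C x) b := by
  induction b using Polynomial.induction_on' with
  | add p q hp hq => exact hp.add_right hq
  | monomial m d =>
    show C x * _ = _ * C x
    rw [C_mul_monomial, monomial_mul_C, (hx d).eq]

/-- Mapped real polynomials are central in `ℍ[X]`. -/
lemma map_central (a : Polynomial ℝ) (b : Polynomial ℍ) :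
    a.map (algebraMap ℝ ℍ) * b = b * a.map (algebraMap ℝ ℍ) := by
  induction a using Polynomial.induction_on' with
  | add p q hp hq => rw [Polynomial.map_add, add_mul, mul_add, hp, hq]
  | monomial m c =>
    rw [map_monomial, ← C_mul_X_pow_eq_monomial]
    have h1 : Commute (C (algebraMap ℝ ℍ c)) b :=
      commute_C_poly (fun y => Algebra.commutes c y) b
    have h2 : Commute ((X : Polynomial ℍ) ^ m) b := (commute_X b).pow_left m
    exact (h1.mul_left h2).eq

lemma eval_mul_map (q : Polynomial ℍ) (a : Polynomial ℝ) (r : ℍ) :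
    eval r (q * a.map (algebraMap ℝ ℍ)) = eval r q * aeval r a := by
  have h : ∀ k, Commute ((RingHom.id ℍ) ((a.map (algebraMap ℝ ℍ)).coeff k)) r := by
    intro k
    simp only [RingHom.id_apply, coeff_map]
    exact Algebra.commutes _ _
  have := eval₂_mul_noncomm (RingHom.id ℍ) r h (p := q) (q := a.map (algebraMap ℝ ℍ))
  rw [aeval_def, ← eval_map]; exact this

lemma nonreal_im_pos {l : ℍ} (hl : l ∉ Set.range (algebraMap ℝ ℍ)) :
    0 < l.imI ^ 2 + l.imJ ^ 2 + l.imK ^ 2 := by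
  rcases lt_or_eq_of_le (by positivity : (0:ℝ) ≤ l.imI ^ 2 + l.imJ ^ 2 + l.imK ^ 2) with h | h
  · exact h
  · exfalso
    apply hl
    refine ⟨l.re, ?_⟩
    have h1 : l.imI = 0 := by nlinarith [sq_nonneg l.imI, sq_nonneg l.imJ, sq_nonneg l.imK]
    have h2 : l.imJ = 0 := by nlinarith [sq_nonneg l.imI, sq_nonneg l.imJ, sq_nonneg l.imK]
    have h3 : l.imK = 0 := by nlinarith [sq_nonneg l.imI, sq_nonneg l.imJ, sq_nonneg l.imK]
    rw [Quaternion.algebraMap_def]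
    ext <;> simp [h1, h2, h3]

/-- Any root of the characteristic polynomial of a nonreal quaternion is nonreal. -/
lemma root_nonreal {l r : ℍ} (hl : l ∉ Set.range (algebraMap ℝ ℍ))
    (hr : r ^ 2 - (2 * l.re) • r + ((Quaternion.normSq l : ℝ) : ℍ) = 0) :
    r ∉ Set.range (algebraMap ℝ ℍ) := by
  rintro ⟨x, rfl⟩
  rw [Quaternion.algebraMap_def] at hr
  have him := nonreal_im_pos hl
  have hns : (Quaternion.normSq l : ℝ) = l.re ^ 2 + l.imI ^ 2 + l.imJ ^ 2 + l.imK ^ 2 :=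
    Quaternion.normSq_def' l
  have : ((x ^ 2 - (2 * l.re) * x + Quaternion.normSq l : ℝ) : ℍ) = 0 := by
    push_cast
    rw [← hr]
    rw [Quaternion.smul_coe]
    push_cast
    ring
  have h0 : x ^ 2 - (2 * l.re) * x + Quaternion.normSq l = 0 := by
    have h' := congrArg QuaternionAlgebra.re this
    change _ = (0:ℝ) at h'
    simpa [← Quaternion.coe_pow] using h'
  nlinarith [sq_nonneg (x - l.re)]

lemma lam_is_root (l : ℍ) :
    l ^ 2 - (2 * l.re) • l + ((Quaternion.normSq l : ℝ) : ℍ) = 0 := by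
  have h1 : l + star l = ((2 * l.re : ℝ) : ℍ) := Quaternion.self_add_star' l
  have h2 : star l * l = ((Quaternion.normSq l : ℝ) : ℍ) := Quaternion.star_mul_self l
  have : (2 * l.re) • l = ((2 * l.re : ℝ) : ℍ) * l := by
    rw [Quaternion.coe_mul_eq_smul]
  rw [this, ← h1, ← h2]
  noncomm_ring

lemma star_lam_is_root (l : ℍ) :
    (star l) ^ 2 - (2 * l.re) • (star l) + ((Quaternion.normSq l : ℝ) : ℍ) = 0 := by
  have := lam_is_root (star l)
  simpa [Quaternion.normSq_star] using this

lemma lam_ne_star {l : ℍ} (hl : l ∉ Set.range (algebraMap ℝ ℍ)) : l ≠ star l := by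
  intro h
  apply hl
  refine ⟨l.re, ?_⟩
  have hI : l.imI = 0 := by
    have := congrArg QuaternionAlgebra.imI h
    rw [Quaternion.imI_star] at this; linarith
  have hJ : l.imJ = 0 := by
    have := congrArg QuaternionAlgebra.imJ h
    rw [Quaternion.imJ_star] at this; linarith
  have hK : l.imK = 0 := by
    have := congrArg QuaternionAlgebra.imK h
    rw [Quaternion.imK_star] at this; linarith
  rw [Quaternion.algebraMap_def]
  ext <;> simp [hI, hJ, hK]

/-- Key division step: if `f` vanishes at two distinct roots of `cp t ν`
(which are roots of the quadratic), then `f` is a right multiple of it. -/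
lemma exists_factor (f : Polynomial ℍ) (t ν : ℝ) (r₁ r₂ : ℍ) (h12 : r₁ ≠ r₂)
    (hp1 : aeval r₁ (cp t ν) = 0) (hp2 : aeval r₂ (cp t ν) = 0)
    (hf1 : eval r₁ f = 0) (hf2 : eval r₂ f = 0) :
    ∃ q, f = q * (cp t ν).map (algebraMap ℝ ℍ) := by
  set P : Polynomial ℍ := (cp t ν).map (algebraMap ℝ ℍ) with hP
  have hPm : P.Monic := (cp_monic t ν).map _
  have hdiv := modByMonic_add_div f P
  set rem := f %ₘ P with hrem
  set q := f /ₘ P with hq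
  have hfe : f = q * P + rem := by
    rw [← hdiv, hP, ← map_central]
    exact (add_comm _ _)
  have hdeg : rem.degree < P.degree := degree_modByMonic_lt f hPm
  have hPdeg : P.degree = 2 := by
    rw [hP, degree_map_eq_of_injective (algebraMap ℝ ℍ).injective,
      degree_eq_natDegree (cp_monic t ν).ne_zero, cp_natDegree]
    rfl
  have hdeg1 : rem.degree ≤ 1 := by
    rw [hPdeg] at hdeg
    exact Order.le_of_lt_succ (by exact_mod_cast hdeg)
  have hrem_eq : rem = C (rem.coeff 1) * X + C (rem.coeff 0) :=
    eq_X_add_C_of_degree_le_one hdeg1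
  have heval : ∀ r : ℍ, aeval r (cp t ν) = 0 → eval r f = 0 →
      rem.coeff 1 * r + rem.coeff 0 = 0 := by
    intro r hpr hfr
    have : eval r f = eval r q * aeval r (cp t ν) + eval r rem := by
      rw [hfe, hP, eval_add, eval_mul_map]
    rw [hfr, hpr, mul_zero, zero_add] at this
    have h2 : eval r rem = rem.coeff 1 * r + rem.coeff 0 := by
      conv_lhs => rw [hrem_eq]
      simp
    rw [← h2, ← this]
  have e1 := heval r₁ hp1 hf1
  have e2 := heval r₂ hp2 hf2
  have hc1 : rem.coeff 1 = 0 := by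
    have : rem.coeff 1 * (r₁ - r₂) = 0 := by
      have ha : rem.coeff 1 * r₁ = -rem.coeff 0 := eq_neg_of_add_eq_zero_left e1
      have hb : rem.coeff 1 * r₂ = -rem.coeff 0 := eq_neg_of_add_eq_zero_left e2
      rw [mul_sub, ha, hb, sub_self]
    rcases mul_eq_zero.mp this with h | h
    · exact h
    · exact absurd (sub_eq_zero.mp h) h12
  have hc0 : rem.coeff 0 = 0 := by
    rw [hc1, zero_mul, zero_add] at e1
    exact e1
  have hrem0 : rem = 0 := by
    rw [hrem_eq, hc1, hc0]
    simp
  exact ⟨q, by rw [hfe, hrem0, add_zero]⟩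

/-- If `r` is a nonreal root of `cp t₁ ν₁` and `(t₁,ν₁) ≠ (t₂,ν₂)` then
`cp t₂ ν₂` does not vanish at `r`. -/
lemma aeval_ne_zero {r : ℍ} (hr : r ∉ Set.range (algebraMap ℝ ℍ))
    {t₁ ν₁ t₂ ν₂ : ℝ} (h1 : aeval r (cp t₁ ν₁) = 0)
    (hne : ¬(t₁ = t₂ ∧ ν₁ = ν₂)) : aeval r (cp t₂ ν₂) ≠ 0 := by
  intro h2
  rw [aeval_cp] at h1 h2
  have e1' : r ^ 2 + ((ν₁ : ℝ) : ℍ) = t₁ • r := by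
    rw [sub_add_eq_add_sub, sub_eq_zero] at h1; exact h1
  have e2' : r ^ 2 + ((ν₂ : ℝ) : ℍ) = t₂ • r := by
    rw [sub_add_eq_add_sub, sub_eq_zero] at h2; exact h2
  have hsub : (t₂ - t₁) • r = ((ν₂ - ν₁ : ℝ) : ℍ) := by
    rw [sub_smul, ← e1', ← e2']
    push_cast
    abel
  by_cases ht : t₁ = t₂
  · apply hne
    refine ⟨ht, ?_⟩
    rw [ht, sub_self, zero_smul] at hsub
    have : (ν₂ - ν₁ : ℝ) = 0 := by
      exact_mod_cast Quaternion.coe_injective (by simpa using hsub.symm)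
    linarith [this]
  · apply hr
    refine ⟨(t₂ - t₁)⁻¹ * (ν₂ - ν₁), ?_⟩
    rw [Quaternion.algebraMap_def]
    have ht' : t₂ - t₁ ≠ 0 := fun h => ht (by linarith [sub_eq_zero.mp h])
    have := congrArg (fun z => (t₂ - t₁)⁻¹ • z) hsub
    simp only [smul_smul, inv_mul_cancel₀ ht', one_smul] at this
    rw [this, Quaternion.smul_coe]

end

end SphericalAux

open SphericalAux in
theorem poly_with_max_spherical_roots_is_scalar_multiple_of_real_poly'
    (f : Polynomial (Quaternion ℝ)) (n : ℕ) (hn : 1 ≤ n)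
    (hdeg : f.natDegree = 2 * n)
    (lam : Fin n → Quaternion ℝ)
    (hsph : ∀ i, (lam i ∉ Set.range (algebraMap ℝ (Quaternion ℝ)) ∧
    ∀ r : Quaternion ℝ,
      r ^ 2 - (2 * (lam i).re) • r + ((Quaternion.normSq (lam i) : ℝ) : Quaternion ℝ) = 0 →
        Polynomial.eval r f = 0))
    (hne : ∀ i j, i ≠ j → ¬ (2 * (lam i).re = 2 * (lam j).re ∧
      Quaternion.normSq (lam i) = Quaternion.normSq (lam j))) :
    ∃ (c : Quaternion ℝ) (g : Polynomial ℝ),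
      f = c • g.map (algebraMap ℝ (Quaternion ℝ)) := by
  classical
  set t : Fin n → ℝ := fun i => 2 * (lam i).re with ht
  set ν : Fin n → ℝ := fun i => Quaternion.normSq (lam i) with hν
  -- the characteristic polys as quaternion class membership
  have hclass : ∀ i (r : Quaternion ℝ),
      aeval r (cp (t i) (ν i)) = 0 ↔
      r ^ 2 - (2 * (lam i).re) • r + ((Quaternion.normSq (lam i) : ℝ) : Quaternion ℝ) = 0 := by
    intro i r
    rw [aeval_cp]
  -- main induction
  have key : ∀ s : Finset (Fin n), ∃ q : Polynomial (Quaternion ℝ),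
      f = q * (∏ i ∈ s, cp (t i) (ν i)).map (algebraMap ℝ (Quaternion ℝ)) := by
    intro s
    induction s using Finset.induction_on with
    | empty => exact ⟨f, by simp⟩
    | @insert i s hi ih =>
      obtain ⟨q, hq⟩ := ih
      have hq_root : ∀ r : Quaternion ℝ, aeval r (cp (t i) (ν i)) = 0 → eval r q = 0 := by
        intro r hr
        have hfr : eval r f = 0 := (hsph i).2 r ((hclass i r).mp hr)
        rw [hq, eval_mul_map] at hfr
        have hr_nonreal : r ∉ Set.range (algebraMap ℝ (Quaternion ℝ)) :=
          root_nonreal (hsph i).1 ((hclass i r).mp hr)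
        have hprod : ∀ s' : Finset (Fin n), (∀ j ∈ s', j ≠ i) →
            aeval r (∏ j ∈ s', cp (t j) (ν j)) ≠ 0 := by
          intro s'
          induction s' using Finset.induction_on with
          | empty => simp
          | @insert a s'' ha ihs =>
            intro hmem
            rw [Finset.prod_insert ha, map_mul]
            refine mul_ne_zero ?_ (ihs (fun j hj => hmem j (Finset.mem_insert_of_mem hj)))
            have hai : a ≠ i := hmem a (Finset.mem_insert_self a s'')
            exact aeval_ne_zero hr_nonreal hr
              (fun h => hne i a hai.symm ⟨h.1, h.2⟩)
        rcases mul_eq_zero.mp hfr with h | h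
        · exact h
        · exact absurd h (hprod s (fun j hj => fun he => hi (he ▸ hj)))
      -- lam i and star (lam i) are distinct roots of cp i
      have hroot1 : aeval (lam i) (cp (t i) (ν i)) = 0 :=
        (hclass i _).mpr (lam_is_root (lam i))
      have hroot2 : aeval (star (lam i)) (cp (t i) (ν i)) = 0 :=
        (hclass i _).mpr (star_lam_is_root (lam i))
      obtain ⟨q', hq'⟩ := exists_factor q (t i) (ν i) (lam i) (star (lam i))
        (lam_ne_star (hsph i).1) hroot1 hroot2
        (hq_root _ hroot1) (hq_root _ hroot2)
      refine ⟨q', ?_⟩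
      rw [hq, hq', Finset.prod_insert hi, Polynomial.map_mul, mul_assoc,
        map_central]
  obtain ⟨q, hq⟩ := key Finset.univ
  set g : Polynomial ℝ := ∏ i : Fin n, cp (t i) (ν i) with hg
  have hgmonic : g.Monic := monic_prod_of_monic _ _ (fun i _ => cp_monic _ _)
  have hgdeg : g.natDegree = 2 * n := by
    rw [hg, natDegree_prod_of_monic _ _ (fun i _ => cp_monic _ _)]
    simp [cp_natDegree, mul_comm]
  have hGmonic : (g.map (algebraMap ℝ (Quaternion ℝ))).Monic := hgmonic.map _
  by_cases hf0 : f = 0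
  · exact ⟨0, 0, by simp [hf0]⟩
  have hq0 : q ≠ 0 := fun h => hf0 (by rw [hq, h, zero_mul])
  have hdq : q.natDegree = 0 := by
    have hmul : (q * g.map (algebraMap ℝ (Quaternion ℝ))).natDegree =
        q.natDegree + (g.map (algebraMap ℝ (Quaternion ℝ))).natDegree := by
      apply natDegree_mul'
      rw [hGmonic.leadingCoeff, mul_one]
      exact leadingCoeff_ne_zero.mpr hq0
    have hGdeg : (g.map (algebraMap ℝ (Quaternion ℝ))).natDegree = 2 * n := by
      rw [natDegree_map_eq_of_injective (algebraMap ℝ (Quaternion ℝ)).injective, hgdeg]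
    rw [← hq, hdeg, hGdeg] at hmul
    omega
  obtain ⟨c, hc⟩ := natDegree_eq_zero.mp hdq
  exact ⟨c, g, by rw [hq, ← hc, ← smul_eq_C_mul]⟩


/-- A spherical root of `f ∈ ℍ[X]`: a non-real `λ` such that every root of the
characteristic polynomial `p_λ(x) = x² − tr(λ)x + n(λ)` of `λ` is a root of `f`. -/
def SphericalRoot (f : Polynomial (Quaternion ℝ)) (lam : Quaternion ℝ) : Prop :=
  lam ∉ Set.range (algebraMap ℝ (Quaternion ℝ)) ∧
    ∀ r : Quaternion ℝ,
      r ^ 2 - (2 * lam.re) • r + ((Quaternion.normSq lam : ℝ) : Quaternion ℝ) = 0 →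
        Polynomial.eval r f = 0

/-- Quadratic equivalence on ℍ: equal traces and norms. -/
def QuadEquiv (r lam : Quaternion ℝ) : Prop :=
  2 * r.re = 2 * lam.re ∧ Quaternion.normSq r = Quaternion.normSq lam

/- Final Corollary of Section 3 (specialized to ℍ): if `f` has degree `2n`,
`n ≥ 1`, and has `n` pairwise non-equivalent spherical roots, then
`f = c • (g.map φ)` for some `c ∈ ℍ` and `g ∈ ℝ[X]`. -/
theorem poly_with_max_spherical_roots_is_scalar_multiple_of_real_poly
    (f : Polynomial (Quaternion ℝ)) (n : ℕ) (hn : 1 ≤ n)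
    (hdeg : f.natDegree = 2 * n)
    (lam : Fin n → Quaternion ℝ)
    (hsph : ∀ i, SphericalRoot f (lam i))
    (hne : ∀ i j, i ≠ j → ¬ QuadEquiv (lam i) (lam j)) :
    ∃ (c : Quaternion ℝ) (g : Polynomial ℝ),
      f = c • g.map (algebraMap ℝ (Quaternion ℝ)) := by
  exact poly_with_max_spherical_roots_is_scalar_multiple_of_real_poly' f n hn hdeg lam
    (fun i => hsph i) (fun i j h => hne i j h)
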